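/- If a topological group G is Steinhaus with exponent n, then every group homomorphism from G to any separable topological group H is continuous. -/

import Mathlib

open Pointwise Topology

/-- A topological group `G` is Steinhaus with exponent `n` if for every symmetric `W ⊆ G`
such that countably many left translates of `W` cover `G`, the power `Wⁿ` contains a
neighborhood of the identity. -/
def Steinhaus (G : Type*) [Group G] [TopologicalSpace G] (n : ℕ) : Prop :=
  ∀ W : Set G, W⁻¹ = W → (∃ g : ℕ → G, (⋃ i, g i • W) = Set.univ) →
    W ^ n ∈ 𝓝 (1 : G)

/-- There are arbitrarily small symmetric open neighborhoods of `1` whose `k`-th power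
is contained in a given neighborhood. -/
lemma exists_sym_open_pow_subset {H : Type*} [Group H] [TopologicalSpace H]
    [IsTopologicalGroup H] (k : ℕ) {U : Set H} (hU : U ∈ 𝓝 1) :
    ∃ V : Set H, IsOpen V ∧ (1 : H) ∈ V ∧ V⁻¹ = V ∧ V ^ k ⊆ U := by
  induction k generalizing U with
  | zero =>
    obtain ⟨V, hVo, hV1, -⟩ := exists_open_nhds_one_mul_subset hU
    refine ⟨V ∩ V⁻¹, hVo.inter hVo.inv, ⟨hV1, by simpa using hV1⟩, by
      simp [Set.inter_comm], ?_⟩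
    simpa using mem_of_mem_nhds hU
  | succ k ih =>
    obtain ⟨V, hVo, hV1, hVV⟩ := exists_open_nhds_one_mul_subset hU
    obtain ⟨W, hWo, hW1, hWsym, hWk⟩ := ih (hVo.mem_nhds hV1)
    set V' := V ∩ V⁻¹ ∩ W with hV'
    refine ⟨V', (hVo.inter hVo.inv).inter hWo, ⟨⟨hV1, by simpa using hV1⟩, hW1⟩, ?_, ?_⟩
    · simp [hV', Set.inter_inv, hWsym, Set.inter_comm V V⁻¹]
    · have h1 : V' ⊆ V := fun x hx => hx.1.1
      have h2 : V' ⊆ W := fun x hx => hx.2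
      calc V' ^ (k + 1) = V' * V' ^ k := by rw [pow_succ']
        _ ⊆ V * W ^ k := Set.mul_subset_mul h1 (Set.pow_subset_pow_left h2)
        _ ⊆ V * V := Set.mul_subset_mul_left hWk
        _ ⊆ U := hVV

lemma preimage_pow_subset {G H : Type*} [Group G] [Group H] (φ : G →* H)
    (S : Set H) : ∀ k : ℕ, (φ ⁻¹' S) ^ k ⊆ φ ⁻¹' (S ^ k) := by
  intro k
  induction k with
  | zero =>
    intro x hx
    simp only [pow_zero, Set.mem_one] at hx ⊢
    simp [hx, Set.mem_preimage, map_one]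
  | succ k ih =>
    rw [pow_succ, pow_succ]
    rintro x ⟨a, ha, b, hb, rfl⟩
    exact ⟨φ a, ih ha, φ b, hb, (map_mul φ a b).symm⟩

/-- A Steinhaus topological group has automatic continuity: every homomorphism to a
separable topological group is continuous. -/
theorem stmt2 {G H : Type*} [Group G] [TopologicalSpace G] [IsTopologicalGroup G]
    [Group H] [TopologicalSpace H] [IsTopologicalGroup H]
    [TopologicalSpace.SeparableSpace H] (n : ℕ) (hS : Steinhaus G n)
    (φ : G →* H) : Continuous φ := by
  haveI : Nonempty H := ⟨1⟩
  apply continuous_of_continuousAt_one φ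
  rw [ContinuousAt, map_one, Filter.tendsto_def]
  intro U hU
  obtain ⟨V, hVo, hV1, hVsym, hVpow⟩ := exists_sym_open_pow_subset (2 * n) hU
  set W : Set G := φ ⁻¹' (V * V) with hW
  have hWsym : W⁻¹ = W := by
    ext x
    have : (V * V)⁻¹ = V * V := by rw [mul_inv_rev, hVsym]
    simp only [hW, Set.mem_inv, Set.mem_preimage, map_inv]
    rw [← Set.mem_inv, this]
  set d := TopologicalSpace.denseSeq H with hd
  have hdense : DenseRange d := TopologicalSpace.denseRange_denseSeq H
  have key : ∀ i : ℕ, ∃ y : G, (∃ z : G, φ z ∈ d i • V) → φ y ∈ d i • V := by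
    intro i
    by_cases h : ∃ z : G, φ z ∈ d i • V
    · exact ⟨h.choose, fun _ => h.choose_spec⟩
    · exact ⟨1, fun h' => absurd h' h⟩
  choose g hg using key
  have hcover : (⋃ i, g i • W) = Set.univ := by
    ext x
    simp only [Set.mem_univ, iff_true, Set.mem_iUnion]
    have hopen : IsOpen (φ x • V) := hVo.smul _
    have hne : (φ x • V).Nonempty := ⟨φ x, 1, hV1, mul_one _⟩
    obtain ⟨i, hi⟩ := hdense.exists_mem_open hopen hne
    obtain ⟨v, hv, hdv⟩ := hi
    have hx : φ x ∈ d i • V := by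
      refine ⟨v⁻¹, by rw [← hVsym]; exact Set.inv_mem_inv.2 hv, ?_⟩
      rw [← hdv]; simp [smul_eq_mul, mul_assoc]
    have hyi : φ (g i) ∈ d i • V := hg i ⟨x, hx⟩
    refine ⟨i, (g i)⁻¹ * x, ?_, by simp [smul_eq_mul]⟩
    obtain ⟨v₁, hv₁, hv₁e⟩ := hyi
    obtain ⟨v₂, hv₂, hv₂e⟩ := hx
    have : φ ((g i)⁻¹ * x) = v₁⁻¹ * v₂ := by
      rw [map_mul, map_inv, ← hv₁e, ← hv₂e]
      simp [smul_eq_mul, mul_assoc]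
    rw [hW, Set.mem_preimage, this]
    exact Set.mul_mem_mul (by rw [← hVsym]; exact Set.inv_mem_inv.2 hv₁) hv₂
  have hWn : W ^ n ∈ 𝓝 (1 : G) := hS W hWsym ⟨g, hcover⟩
  refine Filter.mem_of_superset hWn ?_
  refine (preimage_pow_subset φ (V * V) n).trans (Set.preimage_mono ?_)
  calc (V * V) ^ n = V ^ (2 * n) := by rw [← sq, ← pow_mul]
    _ ⊆ U := hVpow
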